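/- arXiv:1805.05558 — 3 statements merged into one kernel-verified Lean document; each statement's English description precedes it below -/
import Mathlib

section
/- Let 𝒫 and 𝒢 be two classes of symmetric positive definite n×n real matrices such that every P ∈ 𝒫 commutes with every G ∈ 𝒢. If there exists P ∈ 𝒫 such that PA + AᵀP is positive definite, then for every G ∈ 𝒢 the matrix AG is positive stable. -/
open Matrix

/-- The complex spectrum of a real square matrix. -/
noncomputable def spec {n : ℕ} (A : Matrix (Fin n) (Fin n) ℝ) : Set ℂ :=
  spectrum ℂ (A.map (Complex.ofReal : ℝ → ℂ))

/-- A real diagonal matrix with strictly positive diagonal entries. -/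
def IsPosDiag {n : ℕ} (D : Matrix (Fin n) (Fin n) ℝ) : Prop :=
  D.IsDiag ∧ ∀ i, 0 < D i i

/-- All eigenvalues have positive real part. -/
def PosStable {n : ℕ} (A : Matrix (Fin n) (Fin n) ℝ) : Prop :=
  ∀ μ ∈ spec A, 0 < μ.re

/-- Multiplicative `D`-stability. -/
def DStable {n : ℕ} (A : Matrix (Fin n) (Fin n) ℝ) : Prop :=
  ∀ D, IsPosDiag D → PosStable (D * A)
namespace Aux

variable {n : ℕ}

/-- complexification -/
noncomputable def mc (M : Matrix (Fin n) (Fin n) ℝ) : Matrix (Fin n) (Fin n) ℂ :=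
  M.map (Complex.ofReal : ℝ → ℂ)

lemma mc_mul (M N : Matrix (Fin n) (Fin n) ℝ) : mc (M * N) = mc M * mc N := by
  ext i j
  simp [mc, mul_apply]

lemma mc_add (M N : Matrix (Fin n) (Fin n) ℝ) : mc (M + N) = mc M + mc N := by
  ext i j; simp [mc]

lemma mc_transpose (M : Matrix (Fin n) (Fin n) ℝ) : mc Mᵀ = (mc M)ᵀ := by
  ext i j; simp [mc]

lemma star_mc_mulVec (M : Matrix (Fin n) (Fin n) ℝ) (a : Fin n → ℂ) :
    star (mc M *ᵥ a) = mc M *ᵥ star a := by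
  funext j
  simp only [Pi.star_apply, mulVec, dotProduct, Pi.star_apply]
  rw [show (star : ℂ → ℂ) = (starRingEnd ℂ) from rfl, map_sum]
  congr 1; funext k
  simp [mc, Complex.conj_ofReal, mul_comm]

/-- move a real symmetric matrix across the Hermitian dot product -/
lemma dot_symm_move {S : Matrix (Fin n) (Fin n) ℝ} (hS : Sᵀ = S) (a b : Fin n → ℂ) :
    star a ⬝ᵥ (mc S *ᵥ b) = star (mc S *ᵥ a) ⬝ᵥ b := by
  have hS' : (mc S)ᵀ = mc S := by rw [← mc_transpose, hS]
  rw [Matrix.dotProduct_mulVec, star_mc_mulVec]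
  congr 1
  rw [← hS', Matrix.vecMul_transpose, hS']

lemma re_dot_pos {W : Matrix (Fin n) (Fin n) ℝ} (hW : W.PosDef) {v : Fin n → ℂ}
    (hv : v ≠ 0) : 0 < (star v ⬝ᵥ (mc W *ᵥ v)).re := by
  set x : Fin n → ℝ := fun i => (v i).re with hx
  set y : Fin n → ℝ := fun i => (v i).im with hy
  have key : (star v ⬝ᵥ (mc W *ᵥ v)).re = x ⬝ᵥ (W *ᵥ x) + y ⬝ᵥ (W *ᵥ y) := by
    simp only [dotProduct, mulVec, Complex.re_sum, Pi.star_apply, Finset.mul_sum,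
      Finset.sum_mul, mc, map_apply]
    rw [← Finset.sum_add_distrib]
    congr 1; funext i
    rw [← Finset.sum_add_distrib]
    congr 1; funext j
    simp only [Complex.mul_re, Complex.mul_im, Complex.ofReal_re, Complex.ofReal_im, Pi.star_apply,
      RCLike.star_def, Complex.conj_re, Complex.conj_im, hx, hy]
    ring
  have hxy : x ≠ 0 ∨ y ≠ 0 := by
    by_contra h
    push_neg at h
    apply hv
    funext i
    have h1 : x i = 0 := by rw [h.1]; rfl
    have h2 : y i = 0 := by rw [h.2]; rfl
    exact Complex.ext h1 h2
  rw [key]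
  rcases hxy with h | h
  · have := hW.dotProduct_mulVec_pos h
    have h2 := hW.posSemidef.dotProduct_mulVec_nonneg y
    simp only [star_trivial] at this h2
    linarith
  · have := hW.dotProduct_mulVec_pos h
    have h2 := hW.posSemidef.dotProduct_mulVec_nonneg x
    simp only [star_trivial] at this h2
    linarith

lemma exists_eigenvector {M : Matrix (Fin n) (Fin n) ℂ} {μ : ℂ}
    (hμ : μ ∈ spectrum ℂ M) : ∃ v : Fin n → ℂ, v ≠ 0 ∧ M *ᵥ v = μ • v := by
  have hspec : spectrum ℂ (Matrix.toLin' M) = spectrum ℂ M := by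
    rw [← Matrix.toLin_eq_toLin']
    exact AlgEquiv.spectrum_eq (Matrix.toLinAlgEquiv (Pi.basisFun ℂ (Fin n))) M
  have hEig : Module.End.HasEigenvalue (Matrix.toLin' M) μ :=
    Module.End.hasEigenvalue_iff_mem_spectrum.mpr (hspec ▸ hμ)
  obtain ⟨v, hv⟩ := hEig.exists_hasEigenvector
  exact ⟨v, hv.2, by simpa [Matrix.toLin'_apply] using hv.apply_eq_smul⟩

/-- product of commuting real positive definite matrices is positive definite -/
lemma posDef_mul_comm {G P : Matrix (Fin n) (Fin n) ℝ} (hG : G.PosDef) (hP : P.PosDef)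
    (hcomm : P * G = G * P) : (G * P).PosDef := by
  have hGs : Gᵀ = G := hG.isHermitian
  have hPs : Pᵀ = P := hP.isHermitian
  have hH : (G * P).IsHermitian := by
    show (G * P)ᴴ = G * P
    rw [conjTranspose_mul, conjTranspose_eq_transpose_of_trivial,
      conjTranspose_eq_transpose_of_trivial, hGs, hPs, hcomm]
  have hGunit : IsUnit G.det := hG.isUnit.map (Matrix.detMonoidHom)
  -- eigenvalues positive
  have heig : ∀ i, 0 < hH.eigenvalues i := by
    intro i
    set x : Fin n → ℝ := ⇑(hH.eigenvectorBasis i) with hxdef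
    have hx0 : x ≠ 0 := by
      intro h
      have := hH.eigenvectorBasis.orthonormal.1 i
      rw [show (hH.eigenvectorBasis i : EuclideanSpace ℝ (Fin n)) = 0 from by ext j; exact congrFun h j] at this
      simp at this
    have hmv : (G * P) *ᵥ x = hH.eigenvalues i • x := hH.mulVec_eigenvectorBasis i
    have hPx : P *ᵥ x = hH.eigenvalues i • (G⁻¹ *ᵥ x) := by
      have := congrArg (fun w => G⁻¹ *ᵥ w) hmv
      simpa [Matrix.mulVec_mulVec, ← Matrix.mul_assoc, Matrix.nonsing_inv_mul G hGunit, mulVec_smul] using this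
    have h1 : 0 < x ⬝ᵥ (P *ᵥ x) := by simpa using hP.dotProduct_mulVec_pos hx0
    have h2 : 0 < x ⬝ᵥ (G⁻¹ *ᵥ x) := by simpa using hG.inv.dotProduct_mulVec_pos hx0
    rw [hPx, dotProduct_smul, smul_eq_mul] at h1
    nlinarith [h1, h2]
  have hpsd : (G * P).PosSemidef :=
    hH.posSemidef_iff_eigenvalues_nonneg.mpr fun i => (heig i).le
  refine .of_dotProduct_mulVec_pos hH fun ⦃x⦄ hx => lt_of_le_of_ne (by simpa using hpsd.dotProduct_mulVec_nonneg x) fun h0 => hx ?_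
  have hzero : (G * P) *ᵥ x = 0 := (hpsd.dotProduct_mulVec_zero_iff x).mp h0.symm
  have hunit : IsUnit (G * P).det := by
    rw [det_mul]
    exact hGunit.mul (hP.isUnit.map Matrix.detMonoidHom)
  have := congrArg (fun w => (G * P)⁻¹ *ᵥ w) hzero
  simpa [Matrix.mulVec_mulVec, Matrix.nonsing_inv_mul _ hunit] using this

end Aux

namespace Aux

variable {n : ℕ}

lemma posDef_conj {M B : Matrix (Fin n) (Fin n) ℝ} (hM : M.PosDef) (hB : IsUnit B.det) :
    (Bᵀ * M * B).PosDef := by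
  have hMs : Mᵀ = M := hM.isHermitian
  refine .of_dotProduct_mulVec_pos ?_ fun ⦃x⦄ hx => ?_
  · show (Bᵀ * M * B)ᴴ = Bᵀ * M * B
    simp only [conjTranspose_eq_transpose_of_trivial, transpose_mul, transpose_transpose, hMs]
    rw [Matrix.mul_assoc]
  · have hBx : B *ᵥ x ≠ 0 := by
      intro h
      apply hx
      have := congrArg (fun w => B⁻¹ *ᵥ w) h
      simpa [Matrix.mulVec_mulVec, Matrix.nonsing_inv_mul B hB] using this
    have := hM.dotProduct_mulVec_pos hBx
    simp only [star_trivial] at this ⊢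
    calc x ⬝ᵥ ((Bᵀ * M * B) *ᵥ x) = x ⬝ᵥ (Bᵀ *ᵥ ((M * B) *ᵥ x)) := by
          rw [Matrix.mulVec_mulVec, Matrix.mul_assoc]
      _ = (B *ᵥ x) ⬝ᵥ ((M * B) *ᵥ x) := by
          rw [Matrix.dotProduct_mulVec, Matrix.vecMul_transpose]
      _ = (B *ᵥ x) ⬝ᵥ (M *ᵥ (B *ᵥ x)) := by rw [Matrix.mulVec_mulVec]
      _ > 0 := this

lemma lyapunov {H M : Matrix (Fin n) (Fin n) ℝ} (hH : H.PosDef)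
    (hW : (H * M + Mᵀ * H).PosDef) : PosStable M := by
  intro μ hμ
  obtain ⟨v, hv0, hv⟩ := exists_eigenvector (M := mc M) hμ
  have key : star v ⬝ᵥ (mc (H * M + Mᵀ * H) *ᵥ v)
      = (μ + star μ) * (star v ⬝ᵥ (mc H *ᵥ v)) := by
    rw [mc_add, mc_mul, mc_mul, mc_transpose, add_mulVec, dotProduct_add]
    have t1 : star v ⬝ᵥ ((mc H * mc M) *ᵥ v) = μ * (star v ⬝ᵥ (mc H *ᵥ v)) := by
      rw [← Matrix.mulVec_mulVec, hv, mulVec_smul, dotProduct_smul, smul_eq_mul]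
    have t2 : star v ⬝ᵥ (((mc M)ᵀ * mc H) *ᵥ v) = star μ * (star v ⬝ᵥ (mc H *ᵥ v)) := by
      rw [← Matrix.mulVec_mulVec, Matrix.dotProduct_mulVec, Matrix.vecMul_transpose,
        ← star_mc_mulVec, hv, star_smul, smul_dotProduct, smul_eq_mul]
    rw [t1, t2]; ring
  have hleft := re_dot_pos hW hv0
  have hq := re_dot_pos hH hv0
  rw [key] at hleft
  have h2 : μ + star μ = ((2 * μ.re : ℝ) : ℂ) := by
    rw [RCLike.star_def, Complex.add_conj]
  rw [h2, Complex.re_ofReal_mul] at hleft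
  nlinarith

end Aux


/-- If PA + AᵀP is positive definite for some P ∈ 𝒬 where 𝒬, 𝒢 are commuting classes of
symmetric positive definite matrices, then AG is positive stable for every G ∈ 𝒢. -/
theorem stmt_12 {n : ℕ} (𝒬 𝒢 : Set (Matrix (Fin n) (Fin n) ℝ))
    (h𝒬 : ∀ P ∈ 𝒬, P.PosDef) (h𝒢 : ∀ G ∈ 𝒢, G.PosDef)
    (hcomm : ∀ P ∈ 𝒬, ∀ G ∈ 𝒢, P * G = G * P)
    (A : Matrix (Fin n) (Fin n) ℝ)
    (hlyap : ∃ P ∈ 𝒬, (P * A + Aᵀ * P).PosDef) :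
    ∀ G ∈ 𝒢, PosStable (A * G) := by
  obtain ⟨P, hPQ, hLyap⟩ := hlyap
  intro G hG
  have hPd := h𝒬 P hPQ
  have hGd := h𝒢 G hG
  have hc := hcomm P hPQ G hG
  have hGP : (G * P).PosDef := Aux.posDef_mul_comm hGd hPd hc
  have hGs : Gᵀ = G := hGd.isHermitian
  have hident : (G * P) * (A * G) + (A * G)ᵀ * (G * P)
      = Gᵀ * (P * A + Aᵀ * P) * G := by
    simp only [transpose_mul, hGs, Matrix.mul_add, Matrix.add_mul, Matrix.mul_assoc]
    rw [← hc]
  have hW : ((G * P) * (A * G) + (A * G)ᵀ * (G * P)).PosDef := by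
    rw [hident]
    exact Aux.posDef_conj hLyap (hGd.isUnit.map Matrix.detMonoidHom)
  exact Aux.lyapunov hGP hW
end

section
/- Every Lyapunov diagonally stable matrix is multiplicative D-stable: if there exists a positive diagonal matrix D₀ such that D₀A + AᵀD₀ is positive definite, then DA is positive stable for every positive diagonal matrix D. -/
open Matrix

/-- Positive definiteness transfers to the complexification, in the `re` sense. -/
lemma re_dot_pos {n : ℕ} {M : Matrix (Fin n) (Fin n) ℝ} (hM : M.PosDef)
    (x : Fin n → ℂ) (hx : x ≠ 0) :
    0 < (star x ⬝ᵥ ((M.map (Complex.ofReal : ℝ → ℂ)) *ᵥ x)).re := by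
  classical
  set a : Fin n → ℝ := fun i => (x i).re with ha
  set b : Fin n → ℝ := fun i => (x i).im with hb
  have key : (star x ⬝ᵥ ((M.map (Complex.ofReal : ℝ → ℂ)) *ᵥ x)).re
      = star a ⬝ᵥ (M *ᵥ a) + star b ⬝ᵥ (M *ᵥ b) := by
    simp only [dotProduct, mulVec, Pi.star_apply, map_apply, Complex.re_sum,
      Finset.mul_sum, ← Finset.sum_add_distrib]
    refine Finset.sum_congr rfl fun i _ => ?_
    refine Finset.sum_congr rfl fun j _ => ?_
    simp [Complex.mul_re, ha, hb, RCLike.star_def]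
    try ring
  rw [key]
  have hab : a ≠ 0 ∨ b ≠ 0 := by
    by_contra hc
    push_neg at hc
    apply hx
    funext i
    have h1 := congrFun hc.1 i
    have h2 := congrFun hc.2 i
    simp only [ha, Pi.zero_apply] at h1
    simp only [hb, Pi.zero_apply] at h2
    exact Complex.ext (by simpa using h1) (by simpa using h2)
  rcases hab with h | h
  · exact add_pos_of_pos_of_nonneg (hM.dotProduct_mulVec_pos h) (hM.posSemidef.dotProduct_mulVec_nonneg b)
  · exact add_pos_of_nonneg_of_pos (hM.posSemidef.dotProduct_mulVec_nonneg a) (hM.dotProduct_mulVec_pos h)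


/-- Every Lyapunov diagonally stable matrix is multiplicative D-stable. -/
theorem stmt_14 {n : ℕ} (A : Matrix (Fin n) (Fin n) ℝ)
    (h : ∃ D₀, IsPosDiag D₀ ∧ (D₀ * A + Aᵀ * D₀).PosDef) :
    DStable A := by
  classical
  obtain ⟨D₀, hD₀, hP⟩ := h
  intro D hD μ hμ
  set e : Fin n → ℝ := D₀.diag with he
  set d : Fin n → ℝ := D.diag with hd
  have hD₀eq : D₀ = diagonal e := (hD₀.1.diagonal_diag).symm
  have hDeq : D = diagonal d := (hD.1.diagonal_diag).symm
  have hepos : ∀ i, 0 < e i := fun i => hD₀.2 i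
  have hdpos : ∀ i, 0 < d i := fun i => hD.2 i
  set Ac : Matrix (Fin n) (Fin n) ℂ := A.map (Complex.ofReal : ℝ → ℂ) with hAc
  -- get an eigenvector
  rw [spec, ← AlgEquiv.spectrum_eq (Matrix.toLinAlgEquiv <| Pi.basisFun ℂ (Fin n)),
    ← Module.End.hasEigenvalue_iff_mem_spectrum] at hμ
  obtain ⟨x, hxv⟩ := hμ.exists_hasEigenvector
  have hx0 : x ≠ 0 := hxv.2
  have hBx : ((D * A).map (Complex.ofReal : ℝ → ℂ)) *ᵥ x = μ • x := by
    have := hxv.apply_eq_smul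
    have hrepr : ⇑((Pi.basisFun ℂ (Fin n)).repr x) = x := by
      funext j; simp
    rw [Matrix.toLinAlgEquiv_apply, hrepr] at this
    rw [← this]
    funext i
    simp [Pi.basisFun_apply, Finset.sum_apply, Pi.single_apply, mul_comm]
  have hmap : ((D * A).map (Complex.ofReal : ℝ → ℂ))
      = diagonal (fun i => (d i : ℂ)) * Ac := by
    rw [hDeq, show ((diagonal d * A).map (Complex.ofReal : ℝ → ℂ))
      = (diagonal d).map (Complex.ofReal : ℝ → ℂ) * Ac from
        Matrix.map_mul (f := Complex.ofRealHom), Matrix.diagonal_map (by simp)]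
  have hAx : ∀ i, (Ac *ᵥ x) i = μ * x i / (d i : ℂ) := by
    intro i
    have hdi : (d i : ℂ) ≠ 0 := by exact_mod_cast (hdpos i).ne'
    have h1 := congrFun hBx i
    rw [hmap, ← Matrix.mulVec_mulVec, Matrix.mulVec_diagonal] at h1
    rw [eq_div_iff hdi, mul_comm, h1]
    simp [Pi.smul_apply, smul_eq_mul]
  -- the positive real quantity t
  set t : ℝ := ∑ i, (e i / d i) * Complex.normSq (x i) with ht
  have htpos : 0 < t := by
    obtain ⟨i, hi⟩ : ∃ i, x i ≠ 0 := by
      by_contra hc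
      push_neg at hc
      exact hx0 (funext hc)
    refine Finset.sum_pos' (fun j _ => mul_nonneg (le_of_lt (div_pos (hepos j) (hdpos j)))
      (Complex.normSq_nonneg _)) ⟨i, Finset.mem_univ i, ?_⟩
    · have : 0 < Complex.normSq (x i) := Complex.normSq_pos.mpr hi
      have := div_pos (hepos i) (hdpos i)
      positivity
  set F : ℂ := ∑ i, (starRingEnd ℂ) (x i) * (e i : ℂ) * (Ac *ᵥ x) i with hF
  have hFt : F = μ * (t : ℂ) := by
    rw [hF, ht]
    push_cast
    rw [Finset.mul_sum]
    refine Finset.sum_congr rfl fun i _ => ?_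
    rw [hAx i]
    have hdi : (d i : ℂ) ≠ 0 := by exact_mod_cast (hdpos i).ne'
    rw [Complex.normSq_eq_conj_mul_self]
    field_simp
  -- P = F + conj F
  set M : Matrix (Fin n) (Fin n) ℝ := D₀ * A + Aᵀ * D₀ with hM
  have hPF : (star x ⬝ᵥ ((M.map (Complex.ofReal : ℝ → ℂ)) *ᵥ x))
      = F + (starRingEnd ℂ) F := by
    have hMij : ∀ i j, M i j = e i * A i j + A j i * e j := by
      intro i j
      rw [hM, hD₀eq]
      simp [Matrix.add_apply, Matrix.diagonal_mul, Matrix.mul_diagonal,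
        Matrix.transpose_apply]
    have hFd : F = ∑ i, ∑ j, (starRingEnd ℂ) (x i) * (e i : ℂ) * ((A i j : ℂ) * x j) := by
      rw [hF]
      refine Finset.sum_congr rfl fun i _ => ?_
      rw [show (Ac *ᵥ x) i = ∑ j, (A i j : ℂ) * x j from by simp [hAc, mulVec, dotProduct]]
      rw [Finset.mul_sum]
    have hcFd : (starRingEnd ℂ) F
        = ∑ i, ∑ j, x j * (e j : ℂ) * ((A j i : ℂ) * (starRingEnd ℂ) (x i)) := by
      rw [hFd]
      simp only [map_sum, _root_.map_mul, Complex.conj_ofReal, Complex.conj_conj]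
      rw [Finset.sum_comm]
    rw [hcFd, hFd, ← Finset.sum_add_distrib]
    simp only [dotProduct, mulVec, Pi.star_apply, map_apply, Finset.mul_sum]
    refine Finset.sum_congr rfl fun i _ => ?_
    rw [← Finset.sum_add_distrib]
    refine Finset.sum_congr rfl fun j _ => ?_
    rw [hMij i j]
    push_cast
    simp only [RCLike.star_def]
    ring
  have hre : 0 < (star x ⬝ᵥ ((M.map (Complex.ofReal : ℝ → ℂ)) *ᵥ x)).re :=
    re_dot_pos hP x hx0
  rw [hPF, hFt] at hre
  simp only [Complex.add_re, Complex.conj_re, Complex.mul_re, Complex.ofReal_re,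
    Complex.ofReal_im, mul_zero, sub_zero] at hre
  nlinarith [htpos]
end

section
/- If A is an n×n real matrix such that A + Aᵀ is positive definite, then A is H-stable: HA is positive stable for every symmetric positive definite matrix H. -/
open Matrix

/-- Real part of the complex quadratic form of a real matrix. -/
lemma re_dot {n : ℕ} (M : Matrix (Fin n) (Fin n) ℝ) (x : Fin n → ℂ) :
    (star x ⬝ᵥ (M.map (Complex.ofReal : ℝ → ℂ) *ᵥ x)).re
      = (fun i => (x i).re) ⬝ᵥ (M *ᵥ fun i => (x i).re)
        + (fun i => (x i).im) ⬝ᵥ (M *ᵥ fun i => (x i).im) := by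
  simp only [dotProduct, mulVec, Matrix.map_apply, Pi.star_apply, Finset.mul_sum,
    ← Finset.sum_add_distrib]
  rw [Complex.re_sum]
  refine Finset.sum_congr rfl fun i _ => ?_
  rw [Complex.re_sum]
  refine Finset.sum_congr rfl fun j _ => ?_
  simp [Complex.mul_re, Complex.mul_im]

/-- Imaginary part of the complex quadratic form of a real symmetric matrix vanishes. -/
lemma im_dot {n : ℕ} (M : Matrix (Fin n) (Fin n) ℝ) (hM : Mᵀ = M) (x : Fin n → ℂ) :
    (star x ⬝ᵥ (M.map (Complex.ofReal : ℝ → ℂ) *ᵥ x)).im = 0 := by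
  have hsym : ∀ i j, M i j = M j i := fun i j => congrFun (congrFun hM j) i
  have key : (star x ⬝ᵥ (M.map (Complex.ofReal : ℝ → ℂ) *ᵥ x)).im
      = ∑ i, ∑ j, M i j * ((x i).re * (x j).im - (x i).im * (x j).re) := by
    simp only [dotProduct, mulVec, Matrix.map_apply, Pi.star_apply, Finset.mul_sum]
    rw [Complex.im_sum]
    refine Finset.sum_congr rfl fun i _ => ?_
    rw [Complex.im_sum]
    refine Finset.sum_congr rfl fun j _ => ?_
    simp [Complex.mul_re, Complex.mul_im]
    ring
  rw [key]
  have h2 : (∑ i, ∑ j, M i j * ((x i).re * (x j).im - (x i).im * (x j).re))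
      = -∑ i, ∑ j, M i j * ((x i).re * (x j).im - (x i).im * (x j).re) := by
    have hterm : (∑ j, ∑ i, M i j * ((x i).re * (x j).im - (x i).im * (x j).re))
        = ∑ j, ∑ i, -(M j i * ((x j).re * (x i).im - (x j).im * (x i).re)) := by
      refine Finset.sum_congr rfl fun j _ => Finset.sum_congr rfl fun i _ => ?_
      rw [hsym i j]; ring
    conv_lhs => rw [Finset.sum_comm, hterm]
    simp only [Finset.sum_neg_distrib]
  linarith [h2]

/-- Positivity of the complex quadratic form for matrices with positive real quadratic form. -/
lemma pos_re_dot {n : ℕ} (M : Matrix (Fin n) (Fin n) ℝ)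
    (hM : ∀ v : Fin n → ℝ, v ≠ 0 → 0 < v ⬝ᵥ (M *ᵥ v))
    (hM0 : ∀ v : Fin n → ℝ, 0 ≤ v ⬝ᵥ (M *ᵥ v))
    (x : Fin n → ℂ) (hx : x ≠ 0) :
    0 < (star x ⬝ᵥ (M.map (Complex.ofReal : ℝ → ℂ) *ᵥ x)).re := by
  rw [re_dot]
  set a : Fin n → ℝ := fun i => (x i).re with ha
  set b : Fin n → ℝ := fun i => (x i).im with hb
  have hab : a ≠ 0 ∨ b ≠ 0 := by
    by_contra hc
    push_neg at hc
    apply hx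
    funext i
    have h1 : (x i).re = 0 := congrFun hc.1 i
    have h2 : (x i).im = 0 := congrFun hc.2 i
    exact Complex.ext h1 h2
  rcases hab with hA | hB
  · have := hM a hA
    have := hM0 b
    linarith
  · have h1 := hM0 a
    have h2 := hM b hB
    linarith

lemma map_mul_ofReal {n : ℕ} (P Q : Matrix (Fin n) (Fin n) ℝ) :
    (P * Q).map (Complex.ofReal : ℝ → ℂ)
      = P.map (Complex.ofReal : ℝ → ℂ) * Q.map (Complex.ofReal : ℝ → ℂ) := by
  ext i j
  simp [Matrix.mul_apply, Matrix.map_apply]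

lemma map_one_ofReal {n : ℕ} :
    (1 : Matrix (Fin n) (Fin n) ℝ).map (Complex.ofReal : ℝ → ℂ) = 1 :=
  Matrix.map_one _ Complex.ofReal_zero Complex.ofReal_one

/-- If A + Aᵀ is positive definite, then A is H-stable. -/
theorem stmt_15 {n : ℕ} (A : Matrix (Fin n) (Fin n) ℝ)
    (h : (A + Aᵀ).PosDef) :
    ∀ H : Matrix (Fin n) (Fin n) ℝ, H.PosDef → PosStable (H * A) := by
  intro H hH μ hμ
  classical
  -- obtain an eigenvector
  rw [spec, ← AlgEquiv.spectrum_eq (Matrix.toLinAlgEquiv' (R := ℂ) (n := Fin n)),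
    ← Module.End.hasEigenvalue_iff_mem_spectrum] at hμ
  obtain ⟨x, hx⟩ := hμ.exists_hasEigenvector
  have hx0 : x ≠ 0 := hx.right
  have hxe : ((H * A).map (Complex.ofReal : ℝ → ℂ)) *ᵥ x = μ • x := by
    have := hx.apply_eq_smul
    simpa [Matrix.toLinAlgEquiv'_apply, Matrix.toLin'_apply] using this
  have hmul : ((H * A).map (Complex.ofReal : ℝ → ℂ))
      = H.map (Complex.ofReal : ℝ → ℂ) * A.map (Complex.ofReal : ℝ → ℂ) := by
    exact map_mul_ofReal H A
  have hdet : IsUnit H.det := isUnit_iff_ne_zero.mpr hH.det_pos.ne'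
  have hKH : H⁻¹ * H = 1 := Matrix.nonsing_inv_mul H hdet
  have hKHc : (H⁻¹).map (Complex.ofReal : ℝ → ℂ) * H.map (Complex.ofReal : ℝ → ℂ) = 1 := by
    rw [← map_mul_ofReal, hKH, map_one_ofReal]
  have h1 : (H.map (Complex.ofReal : ℝ → ℂ)) *ᵥ ((A.map (Complex.ofReal : ℝ → ℂ)) *ᵥ x)
      = μ • x := by
    rw [mulVec_mulVec, ← hmul, hxe]
  have heq : (A.map (Complex.ofReal : ℝ → ℂ)) *ᵥ x
      = μ • ((H⁻¹).map (Complex.ofReal : ℝ → ℂ) *ᵥ x) := by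
    calc (A.map (Complex.ofReal : ℝ → ℂ)) *ᵥ x
        = ((H⁻¹).map (Complex.ofReal : ℝ → ℂ) * H.map (Complex.ofReal : ℝ → ℂ)) *ᵥ
            ((A.map (Complex.ofReal : ℝ → ℂ)) *ᵥ x) := by rw [hKHc, one_mulVec]
      _ = (H⁻¹).map (Complex.ofReal : ℝ → ℂ) *ᵥ ((H.map (Complex.ofReal : ℝ → ℂ)) *ᵥ
            ((A.map (Complex.ofReal : ℝ → ℂ)) *ᵥ x)) := by rw [← mulVec_mulVec]
      _ = (H⁻¹).map (Complex.ofReal : ℝ → ℂ) *ᵥ (μ • x) := by rw [h1]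
      _ = μ • ((H⁻¹).map (Complex.ofReal : ℝ → ℂ) *ᵥ x) := Matrix.mulVec_smul _ _ _
  have hc : star x ⬝ᵥ (A.map (Complex.ofReal : ℝ → ℂ) *ᵥ x)
      = μ * (star x ⬝ᵥ ((H⁻¹).map (Complex.ofReal : ℝ → ℂ) *ᵥ x)) := by
    rw [heq, dotProduct_smul, smul_eq_mul]
  set t := star x ⬝ᵥ ((H⁻¹).map (Complex.ofReal : ℝ → ℂ) *ᵥ x) with ht
  have hKpd : (H⁻¹).PosDef := hH.inv
  have hKsym : (H⁻¹)ᵀ = H⁻¹ := by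
    have h2 := hKpd.1
    rw [Matrix.IsHermitian, Matrix.conjTranspose] at h2
    simpa [Matrix.conjTranspose_eq_transpose_of_trivial] using hKpd.1.eq
  have htim : t.im = 0 := im_dot _ hKsym x
  have htre : 0 < t.re := by
    apply pos_re_dot
    · intro v hv
      simpa using hKpd.dotProduct_mulVec_pos hv
    · intro v
      simpa using hKpd.posSemidef.dotProduct_mulVec_nonneg v
    · exact hx0
  have hAq : ∀ v : Fin n → ℝ, v ⬝ᵥ ((A + Aᵀ) *ᵥ v) = 2 * (v ⬝ᵥ (A *ᵥ v)) := by
    intro v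
    rw [add_mulVec, dotProduct_add]
    have h3 : v ⬝ᵥ (Aᵀ *ᵥ v) = v ⬝ᵥ (A *ᵥ v) := by
      rw [mulVec_transpose, dotProduct_comm, ← dotProduct_mulVec]
    rw [h3]; ring
  have hcre : 0 < (star x ⬝ᵥ (A.map (Complex.ofReal : ℝ → ℂ) *ᵥ x)).re := by
    apply pos_re_dot
    · intro v hv
      have h4 := h.dotProduct_mulVec_pos hv
      simp only [star_trivial] at h4
      have h5 := hAq v
      linarith
    · intro v
      have h4 := h.posSemidef.dotProduct_mulVec_nonneg v
      simp only [star_trivial] at h4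
      have h5 := hAq v
      linarith
    · exact hx0
  rw [hc] at hcre
  have hre : (μ * t).re = μ.re * t.re := by
    rw [Complex.mul_re, htim]; ring
  rw [hre] at hcre
  by_contra hcon
  push_neg at hcon
  have : μ.re * t.re ≤ 0 := mul_nonpos_iff.mpr (Or.inr ⟨hcon, htre.le⟩)
  linarith
end
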